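/- Let r, β > 0, μ₁, μ₂ > 0, λ₁, λ₂ ∈ ℝ. In the two-period example, the time-1 mean satisfies E[Y*(1)] = e^{r−β} + ((λ₁ + λ₂·e^{r−β})/(μ₁ + μ₂·e^{2r−β}))·(1 − e^{−β}). Conversely, given target L1 > e^r and L2 with L2 − L1 e^r > 0 and (L2 − L1 e^r)e^β > (L1 − e^r)e^r, with μ₂, λ₂, μ₁, λ₁ defined by formulas (4.9), one has e^{r−β} + ((λ₁ + λ₂ e^{r−β})/(μ₁ + μ₂ e^{2r−β}))·(1 − e^{−β}) = L1. -/

import Mathlib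

open Real

set_option maxHeartbeats 1000000 in
private lemma aux_stmt_13 (R A L1 L2 μ₂ lam₂ μ₁ lam₁ : ℝ)
    (hA : A ≠ 0) (hA1 : A - 1 ≠ 0) (h1R : 1 + R ≠ 0)
    (hD : L2 - L1 * R ≠ 0) (hM : L1 - R ≠ 0)
    (hQ : A * (1 + R) * (L2 - L1 * R) + R * R * (L1 - R) * (A - 1) ≠ 0)
    (hμ₂ : μ₂ = (A - 1) / (L2 - L1 * R))
    (hlam₂ : lam₂ = (L2 * A - L1 * R) / (L2 - L1 * R))
    (hμ₁ : μ₁ = ((A - 1) * (A + lam₂ * R) - (L1 * A - R) * (R * R) * μ₂) / ((L1 - R) * A))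
    (hlam₁ : lam₁ = μ₁ * (lam₂ * (R - R / A) / (μ₂ * (R * R) + μ₁)
        + (μ₂ * (R * R * R / A) + μ₁ * R) / (μ₂ * (R * R) + μ₁))
        + (μ₂ * (R * R) + μ₁ * A) / (μ₂ * (R * R) + μ₁)) :
    R / A + ((lam₁ + lam₂ * (R / A)) / (μ₁ + μ₂ * (R * R / A))) * (1 - 1 / A) = L1 := by
  set D := L2 - L1 * R with hDdef
  set M := L1 - R with hMdef
  have hμ₁' : μ₁ = (A - 1) * (A * (1 + R) * D - R * R * M) / (D * M * A) := by
    rw [hμ₁, hμ₂, hlam₂]; field_simp; ring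
  have hP : μ₂ * (R * R) + μ₁
      = (A - 1) * (A * (1 + R) * D + R * R * M * (A - 1)) / (D * M * A) := by
    rw [hμ₁', hμ₂]; field_simp; ring
  have hPne : μ₂ * (R * R) + μ₁ ≠ 0 := by
    rw [hP]; exact div_ne_zero (mul_ne_zero hA1 hQ) (mul_ne_zero (mul_ne_zero hD hM) hA)
  have hT : μ₁ + μ₂ * (R * R / A) = (A - 1) * (1 + R) / M := by
    rw [hμ₁', hμ₂]; field_simp; ring
  have hW1 : μ₁ * (lam₂ * (R - R / A)) = (A - 1) ^ 2 * (A * (1 + R) * D - R * R * M)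
      * R * (L2 * A - L1 * R) / (D ^ 2 * M * A ^ 2) := by
    rw [hμ₁', hlam₂]; field_simp
  have hW2 : μ₁ * (μ₂ * (R * R * R / A) + μ₁ * R)
      = (A - 1) ^ 2 * (A * (1 + R) * D - R * R * M) * R * (1 + R) / (D * M ^ 2 * A) := by
    rw [hμ₁', hμ₂]; field_simp; ring
  have hW3 : μ₂ * (R * R) + μ₁ * A = (A - 1) * A * (1 + R) / M := by
    rw [hμ₁', hμ₂]; field_simp; ring
  have hWsum : lam₁ * (μ₂ * (R * R) + μ₁) = μ₁ * (lam₂ * (R - R / A))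
      + μ₁ * (μ₂ * (R * R * R / A) + μ₁ * R) + (μ₂ * (R * R) + μ₁ * A) := by
    have hPne' : R ^ 2 * μ₂ + μ₁ ≠ 0 := by convert hPne using 1; ring
    rw [hlam₁]; field_simp
  have hkey : lam₁ * (μ₂ * (R * R) + μ₁)
      = ((L1 * A - R) * (1 + R) / M - lam₂ * (R / A)) * (μ₂ * (R * R) + μ₁) := by
    rw [hWsum, hW1, hW2, hW3, hP, hlam₂]
    field_simp
    ring
  have hlam₁' : lam₁ = (L1 * A - R) * (1 + R) / M - lam₂ * (R / A) :=
    mul_right_cancel₀ hPne hkey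
  rw [hlam₁', hT, hlam₂]
  field_simp
  ring

theorem stmt_13 (r β L1 L2 : ℝ) (hr : 0 < r) (hβ : 0 < β)
    (hL1 : exp r < L1) (h1 : 0 < L2 - L1 * exp r)
    (h3 : (L2 - L1 * exp r) * exp β > (L1 - exp r) * exp r)
    (μ₂ lam₂ μ₁ lam₁ : ℝ)
    (hμ₂ : μ₂ = (exp β - 1) / (L2 - L1 * exp r))
    (hlam₂ : lam₂ = (L2 * exp β - L1 * exp r) / (L2 - L1 * exp r))
    (hμ₁ : μ₁ = ((exp β - 1) * (exp β + lam₂ * exp r)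
        - (L1 * exp β - exp r) * exp (2 * r) * μ₂) / ((L1 - exp r) * exp β))
    (hlam₁ : lam₁ = μ₁ * (lam₂ * (exp r - exp (r - β)) / (μ₂ * exp (2 * r) + μ₁)
        + (μ₂ * exp (3 * r - β) + μ₁ * exp r) / (μ₂ * exp (2 * r) + μ₁))
        + (μ₂ * exp (2 * r) + μ₁ * exp β) / (μ₂ * exp (2 * r) + μ₁)) :
    exp (r - β)
      + ((lam₁ + lam₂ * exp (r - β)) / (μ₁ + μ₂ * exp (2 * r - β))) * (1 - exp (-β))
    = L1 := by
  have e2 : exp (2 * r) = exp r * exp r := by rw [two_mul, exp_add]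
  have e3 : exp (3 * r - β) = exp r * exp r * exp r / exp β := by
    rw [exp_sub, show (3:ℝ) * r = r + r + r by ring, exp_add, exp_add]
  have erb : exp (r - β) = exp r / exp β := by rw [exp_sub]
  have enb : exp (-β) = 1 / exp β := by rw [exp_neg, one_div]
  have e2b : exp (2 * r - β) = exp r * exp r / exp β := by rw [exp_sub, e2]
  rw [e2] at hμ₁
  rw [e2, e3, erb] at hlam₁
  rw [erb, e2b, enb]
  have hA1 : (0:ℝ) < exp β - 1 := by
    have : (1:ℝ) < exp β := by simpa using exp_lt_exp.mpr hβ
    linarith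
  have hM : (0:ℝ) < L1 - exp r := by linarith
  have hR : (0:ℝ) < exp r := exp_pos r
  have hQ : (0:ℝ) < exp β * (1 + exp r) * (L2 - L1 * exp r)
      + exp r * exp r * (L1 - exp r) * (exp β - 1) := by
    have t1 : (0:ℝ) < exp β * (1 + exp r) * (L2 - L1 * exp r) :=
      mul_pos (mul_pos (exp_pos β) (by linarith)) h1
    have t2 : (0:ℝ) < exp r * exp r * (L1 - exp r) * (exp β - 1) :=
      mul_pos (mul_pos (mul_pos hR hR) hM) hA1
    linarith
  exact aux_stmt_13 (exp r) (exp β) L1 L2 μ₂ lam₂ μ₁ lam₁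
    (exp_pos β).ne' hA1.ne' (by positivity : (0:ℝ) < 1 + exp r).ne' h1.ne' hM.ne' hQ.ne' hμ₂ hlam₂ hμ₁ hlam₁
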